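/- (Theorem 3.3, dual observation implies control to a target) Let 0 ≤ T0 < T1 < T2 and ℓ, ε > 0. Assume (O): for every u0 ∈ L²(Ω), ⟨P⁻¹ u0, u0⟩ := Σ_{j≥1} λ_j^{−1} ⟨u0, Φ_j⟩² ≤ ℓ ‖S(T2−T1) u0‖_ω² + ε ‖u0‖². Then (C) holds: for every y_d ∈ L²(Ω) with ⟨P y_d, y_d⟩ := Σ_{j≥1} λ_j ⟨y_d, Φ_j⟩² < ∞, there exists f ∈ L²(Ω) such that (1/ℓ) ‖1_ω f‖² + (1/ε) ‖S(T2−T1)(1_ω f) − y_d‖² ≤ ⟨P y_d, y_d⟩. -/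

import Mathlib

open MeasureTheory Set Filter
open scoped RealInnerProductSpace ENNReal
set_option maxHeartbeats 1000000
set_option synthInstance.maxHeartbeats 400000

noncomputable section

/-- The heat semigroup `S(t)u0 = sum_j e^{-lam_j t} <u0, Phi_j> Phi_j` on `L2(Omega)`,
given a Hilbert basis `B` of eigenfunctions and eigenvalues `lam`. -/
noncomputable def heatSG {d : ℕ} {Ω : Set (EuclideanSpace ℝ (Fin d))}
    (B : HilbertBasis ℕ ℝ (Lp ℝ 2 (volume.restrict Ω))) (lam : ℕ → ℝ)
    (t : ℝ) (u : Lp ℝ 2 (volume.restrict Ω)) : Lp ℝ 2 (volume.restrict Ω) :=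
  ∑' j, (Real.exp (-(lam j) * t) * ⟪u, B j⟫) • B j

/-- Multiplication by the indicator function `1_omega` on `L2(Omega)`. -/
noncomputable def indLp {d : ℕ} {Ω : Set (EuclideanSpace ℝ (Fin d))}
    (ω : Set (EuclideanSpace ℝ (Fin d))) (hω : MeasurableSet ω)
    (f : Lp ℝ 2 (volume.restrict Ω)) : Lp ℝ 2 (volume.restrict Ω) :=
  MemLp.toLp (ω.indicator ⇑f) ((Lp.memLp f).indicator hω)

variable {d : ℕ} {Ω : Set (EuclideanSpace ℝ (Fin d))} {ω : Set (EuclideanSpace ℝ (Fin d))}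


theorem indLp_coe (hω : MeasurableSet ω) (f : Lp ℝ 2 (volume.restrict Ω)) :
    ⇑(indLp ω hω f) =ᵐ[volume.restrict Ω] ω.indicator ⇑f := MemLp.coeFn_toLp _

theorem indLp_add (hω : MeasurableSet ω) (f g : Lp ℝ 2 (volume.restrict Ω)) :
    indLp ω hω (f + g) = indLp ω hω f + indLp ω hω g := by
  apply Lp.ext (μ := volume.restrict Ω)
  filter_upwards [indLp_coe hω (f+g), indLp_coe hω f, indLp_coe hω g, Lp.coeFn_add f g,
    Lp.coeFn_add (indLp ω hω f) (indLp ω hω g)] with x h1 h2 h3 h4 h5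
  rw [h1, h5, Pi.add_apply, h2, h3]
  by_cases hx : x ∈ ω
  · rw [Set.indicator_of_mem hx, Set.indicator_of_mem hx, Set.indicator_of_mem hx, h4, Pi.add_apply]
  · simp [Set.indicator_of_notMem, hx]

theorem indLp_smul (hω : MeasurableSet ω) (c : ℝ) (f : Lp ℝ 2 (volume.restrict Ω)) :
    indLp ω hω (c • f) = c • indLp ω hω f := by
  apply Lp.ext (μ := volume.restrict Ω)
  filter_upwards [indLp_coe hω (c • f), indLp_coe hω f, Lp.coeFn_smul c f,
    Lp.coeFn_smul c (indLp ω hω f)] with x h1 h2 h3 h4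
  rw [h1, h4, Pi.smul_apply, h2]
  by_cases hx : x ∈ ω
  · rw [Set.indicator_of_mem hx, Set.indicator_of_mem hx, h3, Pi.smul_apply]
  · simp [Set.indicator_of_notMem, hx]

theorem indLp_idem (hω : MeasurableSet ω) (f : Lp ℝ 2 (volume.restrict Ω)) :
    indLp ω hω (indLp ω hω f) = indLp ω hω f := by
  apply Lp.ext (μ := volume.restrict Ω)
  filter_upwards [indLp_coe hω (indLp ω hω f), indLp_coe hω f] with x h1 h2
  rw [h1, h2]
  by_cases hx : x ∈ ω <;>
    simp [Set.indicator_of_mem, Set.indicator_of_notMem, hx, h2]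

theorem indLp_swap (hω : MeasurableSet ω) (f g : Lp ℝ 2 (volume.restrict Ω)) :
    ⟪indLp ω hω f, g⟫ = ⟪f, indLp ω hω g⟫ := by
  rw [MeasureTheory.L2.inner_def, MeasureTheory.L2.inner_def]
  apply integral_congr_ae
  filter_upwards [indLp_coe hω f, indLp_coe hω g] with x h1 h2
  rw [h1, h2]
  by_cases hx : x ∈ ω <;> simp [Set.indicator_of_mem, Set.indicator_of_notMem, hx]

theorem indLp_inner_self (hω : MeasurableSet ω) (f : Lp ℝ 2 (volume.restrict Ω)) :
    ⟪indLp ω hω f, f⟫ = ‖indLp ω hω f‖ ^ 2 := by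
  rw [← real_inner_self_eq_norm_sq]
  rw [indLp_swap hω f (indLp ω hω f), indLp_idem, real_inner_comm]

theorem indLp_norm_le (hω : MeasurableSet ω) (f : Lp ℝ 2 (volume.restrict Ω)) :
    ‖indLp ω hω f‖ ≤ ‖f‖ := by
  rcases (norm_nonneg (indLp ω hω f)).eq_or_lt with h0 | h0
  · rw [← h0]; exact norm_nonneg f
  · have h1 := indLp_inner_self hω f
    have h2 := real_inner_le_norm (indLp ω hω f) f
    nlinarith

section Heat
variable (B : HilbertBasis ℕ ℝ (Lp ℝ 2 (volume.restrict Ω))) (lam : ℕ → ℝ) (t : ℝ)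


theorem sq_summable (u : Lp ℝ 2 (volume.restrict Ω)) :
    Summable fun j => (⟪u, B j⟫ : ℝ) ^ 2 := by
  refine (B.hasSum_inner_mul_inner u u).summable.congr fun j => ?_
  rw [real_inner_comm u (B j)]; ring

variable (he : ∀ j, Real.exp (-(lam j) * t) ≤ 1)
include he

theorem heat_memℓp (u : Lp ℝ 2 (volume.restrict Ω)) :
    Memℓp (fun j => Real.exp (-(lam j) * t) * ⟪u, B j⟫) 2 := by
  apply memℓp_gen
  have hnorm : ∀ x : ℝ, ‖x‖ ^ ENNReal.toReal 2 = x ^ 2 := fun x => by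
    rw [show (ENNReal.toReal 2) = ((2 : ℕ) : ℝ) by norm_num, Real.rpow_natCast,
      Real.norm_eq_abs, sq_abs]
  refine Summable.of_nonneg_of_le (fun j => by rw [hnorm]; positivity) (fun j => ?_)
    (sq_summable B u)
  rw [hnorm]
  have h0 := Real.exp_pos (-(lam j) * t)
  have h1 := he j
  have he2 : Real.exp (-(lam j) * t) ^ 2 ≤ 1 := by nlinarith
  calc (Real.exp (-(lam j) * t) * ⟪u, B j⟫) ^ 2
      = Real.exp (-(lam j) * t) ^ 2 * ⟪u, B j⟫ ^ 2 := by ring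
    _ ≤ 1 * ⟪u, B j⟫ ^ 2 := mul_le_mul_of_nonneg_right he2 (sq_nonneg _)
    _ = ⟪u, B j⟫ ^ 2 := one_mul _

theorem heatSG_hasSum (u : Lp ℝ 2 (volume.restrict Ω)) :
    HasSum (fun j => (Real.exp (-(lam j) * t) * ⟪u, B j⟫) • B j) (heatSG B lam t u) := by
  have h : HasSum (fun j => (Real.exp (-(lam j) * t) * ⟪u, B j⟫) • B j)
      (B.repr.symm ⟨_, heat_memℓp B lam t he u⟩) :=
    B.hasSum_repr_symm ⟨_, heat_memℓp B lam t he u⟩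
  unfold heatSG
  exact h.tsum_eq ▸ h

theorem heatSG_hasSum_inner (u v : Lp ℝ 2 (volume.restrict Ω)) :
    HasSum (fun j => Real.exp (-(lam j) * t) * ⟪u, B j⟫ * ⟪v, B j⟫)
      ⟪v, heatSG B lam t u⟫ := by
  have h := (heatSG_hasSum B lam t he u).mapL (innerSL ℝ v)
  refine h.congr_fun fun j => ?_
  simp [inner_smul_right]

theorem heatSG_symm (u v : Lp ℝ 2 (volume.restrict Ω)) :
    ⟪heatSG B lam t u, v⟫ = ⟪u, heatSG B lam t v⟫ := by
  calc ⟪heatSG B lam t u, v⟫ = ⟪v, heatSG B lam t u⟫ := real_inner_comm _ _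
    _ = ∑' j, Real.exp (-(lam j) * t) * ⟪u, B j⟫ * ⟪v, B j⟫ :=
        (heatSG_hasSum_inner B lam t he u v).tsum_eq.symm
    _ = ∑' j, Real.exp (-(lam j) * t) * ⟪v, B j⟫ * ⟪u, B j⟫ :=
        tsum_congr fun j => by ring
    _ = ⟪u, heatSG B lam t v⟫ := (heatSG_hasSum_inner B lam t he v u).tsum_eq

theorem heatSG_coeff (u : Lp ℝ 2 (volume.restrict Ω)) (k : ℕ) :
    ⟪heatSG B lam t u, B k⟫ = Real.exp (-(lam k) * t) * ⟪u, B k⟫ := by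
  rw [real_inner_comm]
  have h := heatSG_hasSum_inner B lam t he u (B k)
  have h2 : HasSum (fun j => Real.exp (-(lam j) * t) * ⟪u, B j⟫ * ⟪B k, B j⟫)
      (Real.exp (-(lam k) * t) * ⟪u, B k⟫) := by
    have horth := B.orthonormal
    have h3 := hasSum_ite_eq k (Real.exp (-(lam k) * t) * ⟪u, B k⟫)
    refine h3.congr_fun fun j => ?_
    rcases eq_or_ne j k with rfl | hjk
    · simp [orthonormal_iff_ite.mp horth j j, horth.1 j]
    · simp [hjk, orthonormal_iff_ite.mp horth k j, (Ne.symm hjk)]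
  exact h.unique h2

theorem heatSG_add (u v : Lp ℝ 2 (volume.restrict Ω)) :
    heatSG B lam t (u + v) = heatSG B lam t u + heatSG B lam t v := by
  have h := (heatSG_hasSum B lam t he u).add (heatSG_hasSum B lam t he v)
  have h2 : HasSum (fun j => (Real.exp (-(lam j) * t) * ⟪u + v, B j⟫) • B j)
      (heatSG B lam t u + heatSG B lam t v) := by
    refine h.congr_fun fun j => ?_
    rw [inner_add_left]
    module
  exact (heatSG_hasSum B lam t he (u + v)).unique h2

theorem heatSG_smul (c : ℝ) (u : Lp ℝ 2 (volume.restrict Ω)) :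
    heatSG B lam t (c • u) = c • heatSG B lam t u := by
  have h := (heatSG_hasSum B lam t he u).const_smul c
  have h2 : HasSum (fun j => (Real.exp (-(lam j) * t) * ⟪c • u, B j⟫) • B j)
      (c • heatSG B lam t u) := by
    refine h.congr_fun fun j => ?_
    rw [real_inner_smul_left, smul_smul]
    ring_nf
  exact (heatSG_hasSum B lam t he (c • u)).unique h2

theorem heatSG_norm_le (hepos : ∀ j, 0 ≤ Real.exp (-(lam j) * t))
    (u : Lp ℝ 2 (volume.restrict Ω)) : ‖heatSG B lam t u‖ ≤ ‖u‖ := by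
  have hP := B.hasSum_inner_mul_inner (heatSG B lam t u) (heatSG B lam t u)
  have hU := B.hasSum_inner_mul_inner u u
  have h1 : ⟪heatSG B lam t u, heatSG B lam t u⟫ ≤ ⟪u, u⟫ := by
    refine hasSum_le (fun j => ?_) hP hU
    have hc := heatSG_coeff B lam t he u j
    have e1 : (⟪B j, heatSG B lam t u⟫ : ℝ) = Real.exp (-(lam j) * t) * ⟪u, B j⟫ := by
      rw [real_inner_comm]; exact hc
    have e2 : (⟪B j, u⟫ : ℝ) = ⟪u, B j⟫ := real_inner_comm _ _
    have h0 := Real.exp_pos (-(lam j) * t)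
    have h1 := he j
    have he2 : Real.exp (-(lam j) * t) * Real.exp (-(lam j) * t) ≤ 1 := by nlinarith
    simp only [hc, e1, e2]
    nlinarith [mul_self_nonneg (⟪u, B j⟫ : ℝ)]
  rw [real_inner_self_eq_norm_sq, real_inner_self_eq_norm_sq] at h1
  nlinarith [norm_nonneg (heatSG B lam t u), norm_nonneg u]

end Heat

/-- Theorem 3.3, dual observation implies control to a target. -/
theorem dual_observation_implies_target_control
    (d : ℕ) (hd : 1 ≤ d) (Ω ω : Set (EuclideanSpace ℝ (Fin d)))
    (hΩo : IsOpen Ω) (hΩb : Bornology.IsBounded Ω) (hΩc : IsConnected Ω)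
    (hωo : IsOpen ω) (hωne : ω.Nonempty) (hωΩ : ω ⊆ Ω) (hωm : MeasurableSet ω)
    (B : HilbertBasis ℕ ℝ (Lp ℝ 2 (volume.restrict Ω)))
    (lam : ℕ → ℝ) (hpos : ∀ j, 0 < lam j) (hmono : Monotone lam)
    (hlim : Tendsto lam atTop atTop)
    (T0 T1 T2 : ℝ) (hT0 : 0 ≤ T0) (hT01 : T0 < T1) (hT12 : T1 < T2)
    (ℓ ε : ℝ) (hℓ : 0 < ℓ) (hε : 0 < ε)
    -- (O)
    (hO : ∀ u0 : Lp ℝ 2 (volume.restrict Ω),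
      (∑' j, (lam j)⁻¹ * ⟪u0, B j⟫ ^ 2) ≤
        ℓ * ‖indLp ω hωm (heatSG B lam (T2 - T1) u0)‖ ^ 2 + ε * ‖u0‖ ^ 2) :
    -- (C)
    ∀ yd : Lp ℝ 2 (volume.restrict Ω),
      Summable (fun j => lam j * ⟪yd, B j⟫ ^ 2) →
      ∃ f : Lp ℝ 2 (volume.restrict Ω),
        (1 / ℓ) * ‖indLp ω hωm f‖ ^ 2 +
          (1 / ε) * ‖heatSG B lam (T2 - T1) (indLp ω hωm f) - yd‖ ^ 2
        ≤ ∑' j, lam j * ⟪yd, B j⟫ ^ 2 := by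
  intro yd hyd
  set t := T2 - T1 with ht_def
  have ht : 0 < t := sub_pos.mpr hT12
  have he : ∀ j, Real.exp (-(lam j) * t) ≤ 1 := fun j => by
    rw [Real.exp_le_one_iff]
    have := hpos j
    nlinarith
  -- the heat semigroup and the indicator multiplication as continuous linear maps
  let S : Lp ℝ 2 (volume.restrict Ω) →L[ℝ] Lp ℝ 2 (volume.restrict Ω) :=
    LinearMap.mkContinuous
      { toFun := heatSG B lam t
        map_add' := heatSG_add B lam t he
        map_smul' := fun c u => heatSG_smul B lam t he c u }
      1 (fun u => by
        simpa using heatSG_norm_le B lam t he (fun j => (Real.exp_pos _).le) u)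
  let R : Lp ℝ 2 (volume.restrict Ω) →L[ℝ] Lp ℝ 2 (volume.restrict Ω) :=
    LinearMap.mkContinuous
      { toFun := indLp ω hωm
        map_add' := indLp_add hωm
        map_smul' := fun c u => indLp_smul hωm c u }
      1 (fun u => by simpa using indLp_norm_le hωm u)
  let A : Lp ℝ 2 (volume.restrict Ω) →L[ℝ] Lp ℝ 2 (volume.restrict Ω) :=
    ℓ • (S.comp (R.comp S)) + ε • ContinuousLinearMap.id ℝ _
  have hAapp : ∀ u, A u = ℓ • heatSG B lam t (indLp ω hωm (heatSG B lam t u)) + ε • u :=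
    fun u => by
      simp only [A, S, R, ContinuousLinearMap.add_apply, ContinuousLinearMap.smul_apply,
        ContinuousLinearMap.coe_comp', Function.comp_apply, LinearMap.mkContinuous_apply,
        LinearMap.coe_mk, AddHom.coe_mk, ContinuousLinearMap.coe_id', id_eq]
  have hAinner : ∀ u, ⟪A u, u⟫ =
      ℓ * ‖indLp ω hωm (heatSG B lam t u)‖ ^ 2 + ε * ‖u‖ ^ 2 := fun u => by
    rw [hAapp u, inner_add_left, real_inner_smul_left, real_inner_smul_left,
      heatSG_symm B lam t he (indLp ω hωm (heatSG B lam t u)) u,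
      indLp_inner_self hωm (heatSG B lam t u), real_inner_self_eq_norm_sq]
  -- the bilinear form of A and its coercivity
  let Bform : Lp ℝ 2 (volume.restrict Ω) →L[ℝ] Lp ℝ 2 (volume.restrict Ω) →L[ℝ] ℝ :=
    LinearMap.mkContinuous
      { toFun := fun u => (innerSL ℝ (A u) : Lp ℝ 2 (volume.restrict Ω) →L[ℝ] ℝ)
        map_add' := fun u v => by
          ext w
          simp [inner_add_left]
        map_smul' := fun c u => by
          ext w
          simp [real_inner_smul_left] }
      ‖A‖ (fun u => by
        simp only [LinearMap.coe_mk, AddHom.coe_mk]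
        rw [innerSL_apply_norm]
        exact A.le_opNorm u)
  have hBform : ∀ u w, Bform u w = ⟪A u, w⟫ := fun u w => by
    simp [Bform]
  have hco : IsCoercive Bform := by
    refine ⟨ε, hε, fun u => ?_⟩
    rw [hBform, hAinner]
    have h1 : 0 ≤ ℓ * ‖indLp ω hωm (heatSG B lam t u)‖ ^ 2 := by positivity
    nlinarith [sq_nonneg ‖u‖]
  -- solve A u0 = yd
  set u0 := hco.continuousLinearEquivOfBilin.symm yd with hu0_def
  have hu0 : A u0 = yd := by
    apply ext_inner_right ℝ
    intro w
    have h := hco.continuousLinearEquivOfBilin_apply u0 w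
    rw [hu0_def, ContinuousLinearEquiv.apply_symm_apply] at h
    rw [← hBform u0 w, ← h]
  set z := indLp ω hωm (heatSG B lam t u0) with hz
  set f := indLp ω hωm (ℓ • heatSG B lam t u0) with hf_def
  refine ⟨f, ?_⟩
  have hf1 : indLp ω hωm f = ℓ • z := by
    rw [hf_def, indLp_idem, indLp_smul]
  have hyd_eq : ℓ • heatSG B lam t z + ε • u0 = yd := by
    rw [← hu0, hAapp u0]
  have hstep : heatSG B lam t (indLp ω hωm f) - yd = -(ε • u0) := by
    rw [hf1, heatSG_smul B lam t he, ← hyd_eq]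
    abel
  have hnorm1 : ‖indLp ω hωm f‖ = ℓ * ‖z‖ := by
    rw [hf1, norm_smul, Real.norm_eq_abs, abs_of_pos hℓ]
  have hnorm2 : ‖heatSG B lam t (indLp ω hωm f) - yd‖ = ε * ‖u0‖ := by
    rw [hstep, norm_neg, norm_smul, Real.norm_eq_abs, abs_of_pos hε]
  have hLHS : (1 / ℓ) * ‖indLp ω hωm f‖ ^ 2 +
      (1 / ε) * ‖heatSG B lam t (indLp ω hωm f) - yd‖ ^ 2 = ℓ * ‖z‖ ^ 2 + ε * ‖u0‖ ^ 2 := by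
    rw [hnorm1, hnorm2]
    field_simp
  -- value of the cost
  have hyd0 : ⟪yd, u0⟫ = ℓ * ‖z‖ ^ 2 + ε * ‖u0‖ ^ 2 := by
    rw [← hu0]
    exact hAinner u0
  -- duality bound
  have hcb : HasSum (fun j => (⟪yd, B j⟫ : ℝ) * ⟪u0, B j⟫) ⟪yd, u0⟫ := by
    refine (B.hasSum_inner_mul_inner yd u0).congr_fun fun j => ?_
    rw [real_inner_comm (B j) u0]
  have hb2 : Summable fun j => (⟪u0, B j⟫ : ℝ) ^ 2 := sq_summable B u0
  have hbsum : Summable fun j => (lam j)⁻¹ * (⟪u0, B j⟫ : ℝ) ^ 2 := by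
    refine Summable.of_nonneg_of_le (fun j => ?_) (fun j => ?_) (hb2.mul_left (lam 0)⁻¹)
    · have := hpos j
      positivity
    · refine mul_le_mul_of_nonneg_right ?_ (sq_nonneg _)
      exact inv_anti₀ (hpos 0) (hmono (Nat.zero_le j))
  have key : ⟪yd, u0⟫ ≤
      (1 / 2) * ((∑' j, lam j * ⟪yd, B j⟫ ^ 2) + ∑' j, (lam j)⁻¹ * ⟪u0, B j⟫ ^ 2) := by
    rw [← hcb.tsum_eq]
    have hs2 : Summable fun j =>
        (1 / 2) * (lam j * (⟪yd, B j⟫ : ℝ) ^ 2 + (lam j)⁻¹ * ⟪u0, B j⟫ ^ 2) :=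
      (hyd.add hbsum).mul_left _
    calc (∑' j, (⟪yd, B j⟫ : ℝ) * ⟪u0, B j⟫)
        ≤ ∑' j, (1 / 2) * (lam j * (⟪yd, B j⟫ : ℝ) ^ 2 + (lam j)⁻¹ * ⟪u0, B j⟫ ^ 2) := by
          refine Summable.tsum_le_tsum (fun j => ?_) hcb.summable hs2
          have hl := hpos j
          have hinv : (lam j)⁻¹ * lam j = 1 := inv_mul_cancel₀ hl.ne'
          nlinarith [mul_nonneg (inv_pos.mpr hl).le
            (sq_nonneg (lam j * ⟪yd, B j⟫ - ⟪u0, B j⟫)), hinv]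
      _ = (1 / 2) * ((∑' j, lam j * ⟪yd, B j⟫ ^ 2) + ∑' j, (lam j)⁻¹ * ⟪u0, B j⟫ ^ 2) := by
          rw [tsum_mul_left, Summable.tsum_add hyd hbsum]
  have hO' : (∑' j, (lam j)⁻¹ * ⟪u0, B j⟫ ^ 2) ≤ ℓ * ‖z‖ ^ 2 + ε * ‖u0‖ ^ 2 := by
    rw [hz]
    exact hO u0
  rw [hLHS]
  linarith [key, hO', hyd0]
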